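/- Let X be a tight Grassmannian frame of m vectors for R^n at angle α which is not an ETF, with m odd. Then every x ∈ X has at most m-2 packing neighbors, and moreover there exists x ∈ X with at most m-3 packing neighbors, i.e., |{y ∈ X : y ≠ x, |⟨x,y⟩| = α}| ≤ m-3. -/

import Mathlib

open scoped RealInnerProductSpace
abbrev E (n : ℕ) := EuclideanSpace ℝ (Fin n)
noncomputable def cohF {n m : ℕ} (x : Fin m → E n) : ℝ :=
  sSup {r : ℝ | ∃ i j : Fin m, i ≠ j ∧ r = |⟪x i, x j⟫|}

theorem tight_grassmannian_not_etf_neighbors {n m : ℕ} (hn : 0 < n) (hm : Odd m)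
    (x : Fin m → E n) (hinj : Function.Injective x) (hunit : ∀ i, ‖x i‖ = 1)
    (htight : ∀ v : E n, ∑ i, ⟪x i, v⟫ • x i = ((m : ℝ) / n) • v)
    (α : ℝ) (hα : cohF x = α)
    (hmin : ∀ y : Fin m → E n, Function.Injective y → (∀ i, ‖y i‖ = 1) → α ≤ cohF y)
    (hnotETF : ¬ ∃ c : ℝ, ∀ i j : Fin m, i ≠ j → |⟪x i, x j⟫| = c) :
    (∀ i : Fin m, {j : Fin m | j ≠ i ∧ |⟪x i, x j⟫| = α}.ncard ≤ m - 2) ∧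
    ∃ i : Fin m, {j : Fin m | j ≠ i ∧ |⟪x i, x j⟫| = α}.ncard ≤ m - 3 := by
  classical
  rcases eq_or_ne m 1 with hm1 | hm1
  · exfalso
    apply hnotETF
    refine ⟨0, fun i j hij => ?_⟩
    exfalso
    apply hij
    subst hm1
    exact Subsingleton.elim i j
  obtain ⟨k, hk⟩ := hm
  have hm3 : 3 ≤ m := by omega
  -- coherence bounds all inner products
  have hfin : ({r : ℝ | ∃ i j : Fin m, i ≠ j ∧ r = |⟪x i, x j⟫|}).Finite := by
    apply Set.Finite.subset (Set.finite_range (fun p : Fin m × Fin m => |⟪x p.1, x p.2⟫|))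
    rintro r ⟨i, j, -, rfl⟩
    exact ⟨(i, j), rfl⟩
  have hle : ∀ i j : Fin m, i ≠ j → |⟪x i, x j⟫| ≤ α := by
    intro i j hij
    rw [← hα]
    exact le_csSup hfin.bddAbove ⟨i, j, hij, rfl⟩
  push_neg at hnotETF
  obtain ⟨p, q, hpq, hne⟩ := hnotETF α
  have hlt : |⟪x p, x q⟫| < α := lt_of_le_of_ne (hle p q hpq) hne
  -- frame identity
  have key : ∀ i : Fin m, ∑ j ∈ Finset.univ.erase i, ⟪x i, x j⟫ ^ 2 = (m : ℝ) / n - 1 := by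
    intro i
    have hnorm : ⟪x i, x i⟫ = 1 := by
      rw [real_inner_self_eq_norm_sq, hunit, one_pow]
    have h1 : ⟪∑ j, ⟪x j, x i⟫ • x j, x i⟫ = ⟪((m : ℝ) / n) • x i, x i⟫ := by
      rw [htight (x i)]
    rw [sum_inner, real_inner_smul_left, hnorm, mul_one] at h1
    simp only [real_inner_smul_left] at h1
    have h2 : ∑ j, ⟪x i, x j⟫ ^ 2 = (m : ℝ) / n := by
      rw [← h1]
      exact Finset.sum_congr rfl fun j _ => by rw [real_inner_comm, sq]
    rw [← Finset.add_sum_erase _ _ (Finset.mem_univ i), hnorm, one_pow] at h2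
    linarith
  -- cardinality as finset card
  have hncard : ∀ i : Fin m, {j : Fin m | j ≠ i ∧ |⟪x i, x j⟫| = α}.ncard
      = (Finset.univ.filter (fun j => j ≠ i ∧ |⟪x i, x j⟫| = α)).card := by
    intro i
    rw [Set.ncard_eq_toFinset_card']
    congr 1
    ext j
    simp
  -- each term bounded by α^2
  have hsq : ∀ i j : Fin m, i ≠ j → ⟪x i, x j⟫ ^ 2 ≤ α ^ 2 := by
    intro i j hij
    rw [← sq_abs]
    exact pow_le_pow_left₀ (abs_nonneg _) (hle i j hij) 2
  -- part 1
  have hcard : ∀ i : Fin m,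
      (Finset.univ.filter (fun j => j ≠ i ∧ |⟪x i, x j⟫| = α)).card ≤ m - 2 := by
    intro i
    by_contra hcon
    push_neg at hcon
    have hsub : (Finset.univ.filter (fun j => j ≠ i ∧ |⟪x i, x j⟫| = α)) ⊆ Finset.univ.erase i :=
      fun j hj => Finset.mem_erase.2 ⟨(Finset.mem_filter.1 hj).2.1, Finset.mem_univ j⟩
    have hce : (Finset.univ.erase i).card = m - 1 := by
      simp [Finset.card_erase_of_mem]
    have heq : (Finset.univ.filter (fun j => j ≠ i ∧ |⟪x i, x j⟫| = α)) = Finset.univ.erase i :=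
      Finset.eq_of_subset_of_card_le hsub (by omega)
    have hsum1 : ∑ j ∈ Finset.univ.erase i, ⟪x i, x j⟫ ^ 2 = ((m : ℝ) - 1) * α ^ 2 := by
      rw [Finset.sum_congr rfl (g := fun _ => α ^ 2) (fun j hj => by
        rw [← heq] at hj
        rw [← sq_abs, (Finset.mem_filter.1 hj).2.2]), Finset.sum_const, hce, nsmul_eq_mul]
      push_cast [Nat.cast_sub (by omega : 1 ≤ m)]
      ring
    have hsum2 : ∑ j ∈ Finset.univ.erase p, ⟪x p, x j⟫ ^ 2 < ((m : ℝ) - 1) * α ^ 2 := by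
      have hq : q ∈ Finset.univ.erase p := Finset.mem_erase.2 ⟨hpq.symm, Finset.mem_univ q⟩
      calc ∑ j ∈ Finset.univ.erase p, ⟪x p, x j⟫ ^ 2
          < ∑ _j ∈ Finset.univ.erase p, α ^ 2 := by
            apply Finset.sum_lt_sum
            · intro j hj
              exact hsq p j (Finset.mem_erase.1 hj).1.symm
            · refine ⟨q, hq, ?_⟩
              rw [← sq_abs]
              exact pow_lt_pow_left₀ hlt (abs_nonneg _) two_ne_zero
        _ = ((m : ℝ) - 1) * α ^ 2 := by
            rw [Finset.sum_const, Finset.card_erase_of_mem (Finset.mem_univ p),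
              Finset.card_univ, Fintype.card_fin, nsmul_eq_mul]
            push_cast [Nat.cast_sub (by omega : 1 ≤ m)]
            ring
    rw [key i] at hsum1
    rw [key p] at hsum2
    linarith
  refine ⟨fun i => by rw [hncard i]; exact hcard i, ?_⟩
  by_contra hcon
  push_neg at hcon
  have hdeg : ∀ i : Fin m,
      (Finset.univ.filter (fun j => j ≠ i ∧ |⟪x i, x j⟫| = α)).card = m - 2 := by
    intro i
    have h1 := hcon i
    rw [hncard i] at h1
    have := hcard i
    omega
  -- handshake via simple graph
  let G : SimpleGraph (Fin m) :=
    { Adj := fun i j => j ≠ i ∧ |⟪x i, x j⟫| = α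
      symm := by
        constructor
        rintro i j ⟨h1, h2⟩
        exact ⟨h1.symm, by rwa [real_inner_comm]⟩
      loopless := ⟨fun i h => h.1 rfl⟩ }
  letI : DecidableRel G.Adj := fun i j => Classical.dec _
  have hGdeg : ∀ i : Fin m, G.degree i = m - 2 := by
    intro i
    rw [← hdeg i, SimpleGraph.degree]
    congr 1
    ext j
    simp [SimpleGraph.mem_neighborFinset]
    exact Iff.rfl
  have hsum : ∑ i : Fin m, G.degree i = 2 * G.edgeFinset.card :=
    G.sum_degrees_eq_twice_card_edges
  rw [Finset.sum_congr rfl (fun i _ => hGdeg i), Finset.sum_const, Finset.card_univ,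
    Fintype.card_fin, smul_eq_mul] at hsum
  have hodd : Odd (m * (m - 2)) := by
    refine Odd.mul ⟨k, hk⟩ ?_
    exact Nat.Odd.sub_even (by omega) ⟨k, hk⟩ (by norm_num)
  rw [hsum] at hodd
  exact Nat.not_odd_iff_even.2 ⟨G.edgeFinset.card, two_mul _⟩ hodd
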